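/- Fix positive integers m, n. For every time symmetric quantum operation Q from ℂ^m to ℂ^n, the map Θ(Q) := (n/m)·Q† is a time symmetric quantum operation from ℂ^n to ℂ^m; the resulting map Θ is a bijection from the set of time symmetric quantum operations from ℂ^m to ℂ^n onto the set of time symmetric quantum operations from ℂ^n to ℂ^m, satisfies Θ(p·Q + (1−p)·R) = p·Θ(Q) + (1−p)·Θ(R) for all such operations Q, R and all p ∈ [0,1], and maps the zero map to the zero map. -/

import Mathlib

open scoped ComplexOrder Kronecker
open Matrix

noncomputable section

/-- The space of linear maps from `m × m` complex matrices to `n × n` complex matrices. -/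
abbrev MatMap (m n : ℕ) := Matrix (Fin m) (Fin m) ℂ →ₗ[ℂ] Matrix (Fin n) (Fin n) ℂ

/-- The Choi matrix `Choi(Q) = Σ_{i,j} Q(E_{ij}) ⊗ E_{ij}` of a linear map between
matrix spaces. -/
def choi {m n : ℕ} (Q : MatMap m n) : Matrix (Fin n × Fin m) (Fin n × Fin m) ℂ :=
  Matrix.of fun p q => Q (Matrix.single p.2 q.2 1) p.1 q.1

/-- A linear map is completely positive if its Choi matrix is positive semidefinite. -/
def IsCP {m n : ℕ} (Q : MatMap m n) : Prop := (choi Q).PosSemidef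

/-- A quantum operation: a completely positive trace-non-increasing linear map. -/
def IsQOp {m n : ℕ} (Q : MatMap m n) : Prop :=
  IsCP Q ∧ ∀ ρ : Matrix (Fin m) (Fin m) ℂ, ρ.PosSemidef → (Q ρ).trace ≤ ρ.trace

/-- A quantum channel: a completely positive trace-preserving linear map. -/
def IsChannel {m n : ℕ} (Q : MatMap m n) : Prop :=
  IsCP Q ∧ ∀ ρ : Matrix (Fin m) (Fin m) ℂ, (Q ρ).trace = ρ.trace

/-- A density matrix: positive semidefinite with unit trace. -/
def IsDensity {ι : Type*} [Fintype ι] (ρ : Matrix ι ι ℂ) : Prop :=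
  ρ.PosSemidef ∧ ρ.trace = 1

/-- A rank-one orthogonal projection `|ψ⟩⟨ψ|` for a unit vector `ψ`. -/
def IsRankOneProj {d : ℕ} (P : Matrix (Fin d) (Fin d) ℂ) : Prop :=
  ∃ ψ : Fin d → ℂ, star ψ ⬝ᵥ ψ = 1 ∧ P = Matrix.vecMulVec ψ (star ψ)

/-- A state space symmetry: a bijection between the sets of density matrices that
preserves convex combinations. -/
def IsStateSymmetry {ι κ : Type*} [Fintype ι] [Fintype κ]
    (S : Matrix ι ι ℂ → Matrix κ κ ℂ) : Prop :=
  Set.BijOn S {ρ | IsDensity ρ} {ρ | IsDensity ρ} ∧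
  ∀ ρ σ : Matrix ι ι ℂ, IsDensity ρ → IsDensity σ → ∀ p : ℝ, 0 ≤ p → p ≤ 1 →
    S ((p : ℂ) • ρ + ((1 - p : ℝ) : ℂ) • σ) = (p : ℂ) • S ρ + ((1 - p : ℝ) : ℂ) • S σ

/-- An operation space symmetry: a bijection between the sets of quantum operations that
preserves convex combinations and maps the zero map to the zero map. -/
def IsOpSymmetry {m n m' n' : ℕ} (S : MatMap m n → MatMap m' n') : Prop :=
  Set.BijOn S {Q | IsQOp Q} {Q | IsQOp Q} ∧
  (∀ Q R : MatMap m n, IsQOp Q → IsQOp R → ∀ p : ℝ, 0 ≤ p → p ≤ 1 →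
    S ((p : ℂ) • Q + ((1 - p : ℝ) : ℂ) • R) = (p : ℂ) • S Q + ((1 - p : ℝ) : ℂ) • S R) ∧
  S 0 = 0

/-- Transport of a square matrix along an equality of dimensions. -/
def castMat {m n : ℕ} (h : m = n) (A : Matrix (Fin m) (Fin m) ℂ) :
    Matrix (Fin n) (Fin n) ℂ :=
  Matrix.reindex (finCongr h) (finCongr h) A

/-- The unitary channel `ρ ↦ U ρ U†` as a linear map. -/
def adjAction {d : ℕ} (U : Matrix (Fin d) (Fin d) ℂ) : MatMap d d where
  toFun ρ := U * ρ * Uᴴ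
  map_add' x y := by simp [Matrix.mul_add, Matrix.add_mul]
  map_smul' c x := by simp [Matrix.mul_smul, Matrix.smul_mul]

/-- The Hilbert–Schmidt adjoint of a linear map between matrix spaces; it is the unique
linear map satisfying `Tr[A† Q(B)] = Tr[(Q†(A))† B]` for all `A`, `B`. -/
def hsAdjoint {m n : ℕ} (Q : MatMap m n) : MatMap n m where
  toFun A := Matrix.of fun i j => ((Q (Matrix.single i j 1))ᴴ * A).trace
  map_add' A B := by
    ext i j
    simp [Matrix.mul_add, Matrix.trace_add]
  map_smul' c A := by
    ext i j
    simp [Matrix.mul_smul, Matrix.trace_smul]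

open scoped Classical in
/-- The positive semidefinite square root (junk value `0` on non-psd inputs). -/
noncomputable def psqrt {d : ℕ} (M : Matrix (Fin d) (Fin d) ℂ) : Matrix (Fin d) (Fin d) ℂ :=
  if h : M.PosSemidef then
    (h.1.eigenvectorUnitary : Matrix (Fin d) (Fin d) ℂ) *
      Matrix.diagonal ((RCLike.ofReal : ℝ → ℂ) ∘ (Real.sqrt ·) ∘ h.1.eigenvalues) *
      (star h.1.eigenvectorUnitary : Matrix (Fin d) (Fin d) ℂ)
  else 0

/-- The fidelity `F(ρ,σ) = (Tr[√(√ρ σ √ρ)])²` of two density matrices. -/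
noncomputable def fidelity {d : ℕ} (ρ σ : Matrix (Fin d) (Fin d) ℂ) : ℝ :=
  ((psqrt (psqrt ρ * σ * psqrt ρ)).trace.re) ^ 2

/-- The double transpose `ρ ↦ [Φ(ρᵀ)]ᵀ` of a linear map between matrix spaces. -/
def doubleTransposeMap {m n : ℕ} (Φ : MatMap m n) : MatMap m n where
  toFun ρ := (Φ ρᵀ)ᵀ
  map_add' x y := by simp
  map_smul' c x := by simp

/-- A time symmetric quantum operation: completely positive, with `Q†(I_n) ≤ I_m`
and `Q(I_m/m) ≤ I_n/n` in the Loewner order. -/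
def IsTSOp {m n : ℕ} (Q : MatMap m n) : Prop :=
  IsCP Q ∧ ((1 : Matrix (Fin m) (Fin m) ℂ) - hsAdjoint Q 1).PosSemidef ∧
    ((n : ℂ)⁻¹ • (1 : Matrix (Fin n) (Fin n) ℂ)
      - Q ((m : ℂ)⁻¹ • (1 : Matrix (Fin m) (Fin m) ℂ))).PosSemidef

lemma hsAdjoint_apply {m n : ℕ} (Q : MatMap m n) (A : Matrix (Fin n) (Fin n) ℂ) (i j : Fin m) :
    hsAdjoint Q A i j = ∑ a, ∑ b, star (Q (Matrix.single i j 1) b a) * A b a := by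
  change ((Q (Matrix.single i j 1))ᴴ * A).trace = _
  rw [Matrix.trace]
  simp only [Matrix.diag, Matrix.mul_apply, Matrix.conjTranspose_apply]

lemma hsAdjoint_entry {m n : ℕ} (Q : MatMap m n) (p q : Fin m) (a b : Fin n) :
    hsAdjoint Q (Matrix.single a b 1) p q = star (Q (Matrix.single p q 1) a b) := by
  rw [hsAdjoint_apply]
  simp [Matrix.single, ite_and, Finset.sum_ite_eq, Finset.sum_ite_eq']

lemma map_eq_sum_stdBasis {m n : ℕ} (Q : MatMap m n) (B : Matrix (Fin m) (Fin m) ℂ) :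
    Q B = ∑ a, ∑ b, B a b • Q (Matrix.single a b 1) := by
  conv_lhs => rw [Matrix.matrix_eq_sum_single B]
  rw [map_sum]
  refine Finset.sum_congr rfl fun a _ => ?_
  rw [map_sum]
  refine Finset.sum_congr rfl fun b _ => ?_
  rw [show Matrix.single a b (B a b) = B a b • Matrix.single a b (1:ℂ) by
    rw [Matrix.smul_single, smul_eq_mul, mul_one], _root_.map_smul]

lemma hsAdjoint_hsAdjoint {m n : ℕ} (Q : MatMap m n) : hsAdjoint (hsAdjoint Q) = Q := by
  ext B : 1
  ext p q
  rw [hsAdjoint_apply, map_eq_sum_stdBasis Q B]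
  simp only [Matrix.sum_apply, Matrix.smul_apply, smul_eq_mul]
  rw [Finset.sum_comm]
  refine Finset.sum_congr rfl fun a _ => Finset.sum_congr rfl fun b _ => ?_
  rw [hsAdjoint_entry, star_star, mul_comm]

lemma hsAdjoint_smul {m n : ℕ} (c : ℂ) (Q : MatMap m n) :
    hsAdjoint (c • Q) = star c • hsAdjoint Q := by
  ext A : 1; ext i j
  rw [LinearMap.smul_apply, Matrix.smul_apply, hsAdjoint_apply, hsAdjoint_apply]
  simp [Finset.mul_sum, mul_assoc]

lemma hsAdjoint_add {m n : ℕ} (Q R : MatMap m n) :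
    hsAdjoint (Q + R) = hsAdjoint Q + hsAdjoint R := by
  ext A : 1; ext i j
  rw [LinearMap.add_apply, Matrix.add_apply, hsAdjoint_apply, hsAdjoint_apply, hsAdjoint_apply]
  simp [add_mul, Finset.sum_add_distrib]

lemma choi_hsAdjoint {m n : ℕ} (Q : MatMap m n) :
    choi (hsAdjoint Q) = ((choi Q).submatrix Prod.swap Prod.swap).map star := by
  ext p q
  simp [choi, hsAdjoint_entry]

lemma choi_smul {m n : ℕ} (c : ℂ) (Q : MatMap m n) : choi (c • Q) = c • choi Q := by
  ext p q; simp [choi]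

lemma posSemidef_real_smul {d : Type*} [Fintype d] {M : Matrix d d ℂ} (hM : M.PosSemidef)
    {c : ℝ} (hc : 0 ≤ c) : ((c : ℂ) • M).PosSemidef := by
  constructor
  · unfold Matrix.IsHermitian
    rw [conjTranspose_smul, hM.1]
    simp
  · intro x
    exact (hM.smul (Complex.zero_le_real.mpr hc)).2 x

lemma conj_psd {d : Type*} [Fintype d] {M : Matrix d d ℂ} (hM : M.PosSemidef) :
    (M.map star).PosSemidef := by
  have h : M.map star = Mᵀ := by
    ext i j
    have := congrFun (congrFun hM.1 j) i
    simpa [Matrix.conjTranspose_apply] using this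
  rw [h]
  exact hM.transpose


lemma star_coe_div (a b : ℕ) : star ((a : ℂ) / (b : ℂ)) = (a : ℂ) / (b : ℂ) := by
  rw [star_div₀]; simp

lemma hsAdjoint_zero {m n : ℕ} : hsAdjoint (0 : MatMap m n) = 0 := by
  ext A : 1; ext i j
  rw [hsAdjoint_apply]; simp

lemma theta_theta {m n : ℕ} (hm : (m:ℂ) ≠ 0) (hn : (n:ℂ) ≠ 0) (Q : MatMap m n) :
    ((m:ℂ)/(n:ℂ)) • hsAdjoint (((n:ℂ)/(m:ℂ)) • hsAdjoint Q) = Q := by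
  rw [hsAdjoint_smul, hsAdjoint_hsAdjoint, star_coe_div, smul_smul]
  rw [show (m:ℂ)/(n:ℂ) * ((n:ℂ)/(m:ℂ)) = 1 by field_simp, one_smul]

lemma theta_tsop {m n : ℕ} (hm : 0 < m) (hn : 0 < n) (Q : MatMap m n) (hQ : IsTSOp Q) :
    IsTSOp (((n:ℂ)/(m:ℂ)) • hsAdjoint Q) := by
  have hm' : (m:ℂ) ≠ 0 := Nat.cast_ne_zero.mpr hm.ne'
  have hn' : (n:ℂ) ≠ 0 := Nat.cast_ne_zero.mpr hn.ne'
  obtain ⟨hCP, h1, h2⟩ := hQ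
  refine ⟨?_, ?_, ?_⟩
  · -- completely positive
    unfold IsCP at hCP ⊢
    rw [choi_smul, choi_hsAdjoint]
    have hps : (((choi Q).submatrix Prod.swap Prod.swap).map star).PosSemidef :=
      conj_psd (hCP.submatrix Prod.swap)
    have : ((n:ℂ)/(m:ℂ)) = (((n/m : ℝ)) : ℂ) := by push_cast; ring
    rw [this]
    exact posSemidef_real_smul hps (by positivity)
  · -- first defect condition
    rw [hsAdjoint_smul, hsAdjoint_hsAdjoint, star_coe_div]
    have key : (1 : Matrix (Fin n) (Fin n) ℂ) - (((n:ℂ)/(m:ℂ)) • Q) 1 =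
        ((n:ℝ):ℂ) • ((n:ℂ)⁻¹ • (1 : Matrix (Fin n) (Fin n) ℂ)
          - Q ((m:ℂ)⁻¹ • (1 : Matrix (Fin m) (Fin m) ℂ))) := by
      rw [LinearMap.smul_apply, _root_.map_smul, smul_sub, smul_smul, smul_smul]
      push_cast
      rw [mul_inv_cancel₀ hn', one_smul, div_eq_mul_inv]
    rw [key]
    exact posSemidef_real_smul h2 (by positivity)
  · -- second defect condition
    have key : (m:ℂ)⁻¹ • (1 : Matrix (Fin m) (Fin m) ℂ)
          - (((n:ℂ)/(m:ℂ)) • hsAdjoint Q) ((n:ℂ)⁻¹ • (1 : Matrix (Fin n) (Fin n) ℂ)) =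
        (((m:ℝ)⁻¹ : ℝ):ℂ) • ((1 : Matrix (Fin m) (Fin m) ℂ) - hsAdjoint Q 1) := by
      rw [LinearMap.smul_apply, _root_.map_smul, smul_sub, smul_smul]
      push_cast
      rw [show (n:ℂ)/(m:ℂ) * (n:ℂ)⁻¹ = (m:ℂ)⁻¹ by field_simp]
    rw [key]
    exact posSemidef_real_smul h1 (by positivity)

/-- The map `Θ(Q) = (n/m)·Q†` maps time symmetric quantum operations from `ℂ^m` to `ℂ^n`
to time symmetric quantum operations from `ℂ^n` to `ℂ^m`; it is a bijection between the
two sets, preserves convex combinations, and maps the zero map to the zero map. -/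
theorem theta_is_symmetry_of_TSOps (m n : ℕ) (hm : 0 < m) (hn : 0 < n) :
    (∀ Q : MatMap m n, IsTSOp Q → IsTSOp (((n : ℂ) / (m : ℂ)) • hsAdjoint Q)) ∧
    Set.BijOn (fun Q : MatMap m n => ((n : ℂ) / (m : ℂ)) • hsAdjoint Q)
      {Q : MatMap m n | IsTSOp Q} {Q : MatMap n m | IsTSOp Q} ∧
    (∀ Q R : MatMap m n, IsTSOp Q → IsTSOp R → ∀ p : ℝ, 0 ≤ p → p ≤ 1 →
      ((n : ℂ) / (m : ℂ)) • hsAdjoint ((p : ℂ) • Q + ((1 - p : ℝ) : ℂ) • R)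
        = (p : ℂ) • (((n : ℂ) / (m : ℂ)) • hsAdjoint Q)
          + ((1 - p : ℝ) : ℂ) • (((n : ℂ) / (m : ℂ)) • hsAdjoint R)) ∧
    ((n : ℂ) / (m : ℂ)) • hsAdjoint (0 : MatMap m n) = 0 := by
  have hm' : (m:ℂ) ≠ 0 := Nat.cast_ne_zero.mpr hm.ne'
  have hn' : (n:ℂ) ≠ 0 := Nat.cast_ne_zero.mpr hn.ne'
  refine ⟨fun Q hQ => theta_tsop hm hn Q hQ, ⟨fun Q hQ => theta_tsop hm hn Q hQ, ?_, ?_⟩, ?_, ?_⟩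
  · -- injective
    intro Q hQ R hR h
    have := congrArg (fun T : MatMap n m => ((m:ℂ)/(n:ℂ)) • hsAdjoint T) h
    simpa [theta_theta hm' hn'] using this
  · -- surjective
    intro R hR
    refine ⟨((m:ℂ)/(n:ℂ)) • hsAdjoint R, theta_tsop hn hm R hR, ?_⟩
    exact theta_theta hn' hm' R
  · -- convexity
    intro Q R hQ hR p hp0 hp1
    rw [hsAdjoint_add, hsAdjoint_smul, hsAdjoint_smul]
    rw [show star ((p:ℝ):ℂ) = ((p:ℝ):ℂ) from Complex.conj_ofReal _,
      show star (((1-p:ℝ)):ℂ) = (((1-p:ℝ)):ℂ) from Complex.conj_ofReal _]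
    rw [smul_add, smul_comm ((n:ℂ)/(m:ℂ)), smul_comm ((n:ℂ)/(m:ℂ))]
  · rw [hsAdjoint_zero, smul_zero]
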